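/- Nonexistence of unbounded-to-bounded regular matrices: Let X, Y be Banach spaces, T : X → Y a nonzero linear operator, and I, J ideals on ℕ with I tall. Then there is no matrix A = (A_{n,k}) of linear operators in L(X,Y) such that for every sequence x ∈ X^ℕ that is I-convergent (not necessarily bounded), Ax is well defined, bounded, and J-converges to T(I-lim x). -/

import Mathlib

open Filter

/-- Nonexistence of unbounded-to-bounded regular matrices: if `T ≠ 0` and `I` is tall,
then no matrix `A` of linear operators maps every (not necessarily bounded) `I`-convergent
sequence `x` to a well-defined bounded sequence `Ax` which `J`-converges to `T (I-lim x)`. -/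
theorem stmt12 {X Y : Type*} [NormedAddCommGroup X] [NormedSpace ℝ X] [CompleteSpace X]
    [NormedAddCommGroup Y] [NormedSpace ℝ Y] [CompleteSpace Y]
    (T : X →ₗ[ℝ] Y) (hT : T ≠ 0)
    (I J : Set (Set ℕ))
    (hI_sub : ∀ S S' : Set ℕ, S ∈ I → S' ⊆ S → S' ∈ I)
    (hI_union : ∀ S S' : Set ℕ, S ∈ I → S' ∈ I → S ∪ S' ∈ I)
    (hI_fin : ∀ S : Set ℕ, S.Finite → S ∈ I)
    (hI_proper : Set.univ ∉ I)
    (hI_tall : ∀ S : Set ℕ, S.Infinite → ∃ S' : Set ℕ, S' ⊆ S ∧ S'.Infinite ∧ S' ∈ I)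
    (hJ_sub : ∀ S S' : Set ℕ, S ∈ J → S' ⊆ S → S' ∈ J)
    (hJ_union : ∀ S S' : Set ℕ, S ∈ J → S' ∈ J → S ∪ S' ∈ J)
    (hJ_fin : ∀ S : Set ℕ, S.Finite → S ∈ J)
    (hJ_proper : Set.univ ∉ J) :
    ¬ ∃ A : ℕ → ℕ → X →ₗ[ℝ] Y,
      ∀ x : ℕ → X, ∀ η : X, (∀ ε : ℝ, 0 < ε → {n | ε ≤ ‖x n - η‖} ∈ I) →
        ∃ y : ℕ → Y,
          (∀ n, Tendsto (fun m => ∑ k ∈ Finset.range m, A n k (x k)) atTop (nhds (y n))) ∧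
          (∃ r : ℝ, ∀ n, ‖y n‖ ≤ r) ∧
          (∀ ε : ℝ, 0 < ε → {n | ε ≤ ‖y n - T η‖} ∈ J) := by
  classical
  rintro ⟨A, hA⟩
  -- finite unions of J-sets are in J
  have hJ_bunion : ∀ (F : Finset ℕ) (f : ℕ → Set ℕ),
      (∀ k ∈ F, f k ∈ J) → (⋃ k ∈ F, f k) ∈ J := by
    intro F
    induction F using Finset.induction_on with
    | empty => intro f _; simpa using hJ_fin ∅ Set.finite_empty
    | insert _ _ ha ih =>
      intro f hf
      rw [Finset.set_biUnion_insert]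
      exact hJ_union _ _ (hf _ (Finset.mem_insert_self _ _))
        (ih f fun k hk => hf k (Finset.mem_insert_of_mem hk))
  obtain ⟨x₀, hx₀⟩ : ∃ v, T v ≠ 0 := by
    by_contra h; push_neg at h
    exact hT (LinearMap.ext fun v => by simp [h v])
  have hc0 : (0:ℝ) < ‖T x₀‖ := norm_pos_iff.mpr hx₀
  -- columns J-converge to 0
  have hcol : ∀ (k₀ : ℕ) (v : X) (ε : ℝ), 0 < ε → {m | ε ≤ ‖A m k₀ v‖} ∈ J := by
    intro k₀ v ε hε
    obtain ⟨y, hy1, -, hy3⟩ := hA (fun k => if k = k₀ then v else 0) 0 (by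
      intro ε' hε'
      refine hI_sub _ _ (hI_fin {k₀} (Set.finite_singleton _)) ?_
      intro m hm
      by_contra hne
      have hne' : m ≠ k₀ := hne
      simp [hne'] at hm
      linarith)
    have hy : ∀ m, y m = A m k₀ v := by
      intro m
      refine tendsto_nhds_unique (hy1 m) ?_
      refine Tendsto.congr' ?_ tendsto_const_nhds
      filter_upwards [eventually_ge_atTop (k₀+1)] with M hM
      rw [Finset.sum_eq_single k₀]
      · rw [if_pos rfl]
      · intro b _ hb; rw [if_neg hb, map_zero]
      · intro h; exact absurd (Finset.mem_range.mpr hM) h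
    have hset : {m | ε ≤ ‖A m k₀ v‖} = {m | ε ≤ ‖y m - T 0‖} := by
      ext m; simp [hy m]
    rw [hset]; exact hy3 ε hε
  -- each row has finite support
  have hrow : ∀ n, {k | A n k ≠ 0}.Finite := by
    intro n
    by_contra hinf
    rw [← Set.not_infinite, not_not] at hinf
    obtain ⟨K', hK'sub, hK'inf, hK'I⟩ := hI_tall _ hinf
    have hv : ∀ k ∈ K', ∃ u : X, A n k u ≠ 0 := by
      intro k hk
      have hk0 : A n k ≠ 0 := hK'sub hk
      by_contra h; push_neg at h
      exact hk0 (LinearMap.ext fun u => by simp [h u])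
    choose! v hvne using hv
    set x : ℕ → X := fun k => if k ∈ K' then ((k : ℝ) / ‖A n k (v k)‖) • v k else 0 with hxdef
    have hxconv : ∀ ε : ℝ, 0 < ε → {m | ε ≤ ‖x m - 0‖} ∈ I := by
      intro ε hε
      refine hI_sub _ _ hK'I ?_
      intro m hm
      by_contra hne
      simp only [hxdef, if_neg hne, sub_zero, norm_zero, Set.mem_setOf_eq] at hm
      linarith
    obtain ⟨y, hy1, -, -⟩ := hA x 0 hxconv
    have hterm : Tendsto (fun m => A n m (x m)) atTop (nhds 0) := by
      have h1 := hy1 n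
      have h2 := (h1.comp (tendsto_add_atTop_nat 1)).sub h1
      simp only [Function.comp] at h2
      have heq : (fun m => (∑ k ∈ Finset.range (m+1), A n k (x k))
          - ∑ k ∈ Finset.range m, A n k (x k)) = fun m => A n m (x m) := by
        funext m; rw [Finset.sum_range_succ]; abel
      rw [heq, sub_self] at h2
      exact h2
    have hsmall : ∀ᶠ m in atTop, ‖A n m (x m)‖ < 1 := by
      have h3 : Tendsto (fun m => ‖A n m (x m)‖) atTop (nhds 0) := by
        simpa using hterm.norm
      exact h3.eventually_lt_const one_pos
    obtain ⟨K0, hK0⟩ := eventually_atTop.1 hsmall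
    obtain ⟨k, hkK', hk⟩ := hK'inf.exists_gt (max K0 1)
    have h1 : ‖A n k (x k)‖ < 1 := hK0 k (le_trans (le_max_left _ _) hk.le)
    have hxk : x k = ((k:ℝ)/‖A n k (v k)‖) • v k := by simp [hxdef, hkK']
    have hnz : ‖A n k (v k)‖ ≠ 0 := norm_ne_zero_iff.mpr (hvne k hkK')
    have hnorm : ‖A n k (x k)‖ = (k : ℝ) := by
      rw [hxk, map_smul, norm_smul, Real.norm_eq_abs, abs_of_nonneg (by positivity),
        div_mul_cancel₀ _ hnz]
    rw [hnorm] at h1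
    have hk1 : (1:ℝ) ≤ (k:ℝ) := by
      exact_mod_cast le_trans (le_max_right K0 1) hk.le
    linarith
  -- the set of columns acting nontrivially on x₀ is infinite
  have hCinf : {k | ∃ n, A n k x₀ ≠ 0}.Infinite := by
    by_contra hfin
    rw [Set.not_infinite] at hfin
    obtain ⟨K, hK⟩ : ∃ K : ℕ, ∀ k, (∃ n, A n k x₀ ≠ 0) → k < K := by
      obtain ⟨K, hK⟩ := hfin.bddAbove
      exact ⟨K+1, fun k hk => Nat.lt_succ_of_le (hK hk)⟩
    obtain ⟨y, hy1, -, hy3⟩ := hA (fun _ => x₀) x₀ (by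
      intro ε hε
      refine hI_sub _ _ (hI_fin ∅ Set.finite_empty) ?_
      intro m hm
      simp only [Set.mem_setOf_eq, sub_self, norm_zero] at hm
      linarith)
    have hy : ∀ m, y m = ∑ k ∈ Finset.range K, A m k x₀ := by
      intro m
      refine tendsto_nhds_unique (hy1 m) ?_
      refine Tendsto.congr' ?_ tendsto_const_nhds
      filter_upwards [eventually_ge_atTop K] with M hM
      refine Finset.sum_subset (Finset.range_subset_range.mpr hM) ?_
      intro k _ hkn
      by_contra hA0
      exact hkn (Finset.mem_range.mpr (hK k ⟨m, hA0⟩))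
    set c := ‖T x₀‖ with hcdef
    have hU : (⋃ k ∈ Finset.range K, {m | c/(2*((K:ℝ)+1)) ≤ ‖A m k x₀‖}) ∈ J :=
      hJ_bunion _ _ fun k _ => hcol k x₀ _ (by positivity)
    have hV : {m | c/2 ≤ ‖y m - T x₀‖} ∈ J := hy3 _ (by positivity)
    have hW := hJ_union _ _ hV hU
    have hWne : ({m | c/2 ≤ ‖y m - T x₀‖} ∪
        ⋃ k ∈ Finset.range K, {m | c/(2*((K:ℝ)+1)) ≤ ‖A m k x₀‖}) ≠ Set.univ :=
      fun h => hJ_proper (h ▸ hW)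
    obtain ⟨m, hm⟩ := Set.ne_univ_iff_exists_notMem _ |>.mp hWne
    simp only [Set.mem_union, Set.mem_iUnion, Set.mem_setOf_eq] at hm
    push_neg at hm
    obtain ⟨hm1, hm2⟩ := hm
    have h1 : ‖y m‖ ≤ (K:ℝ) * (c/(2*((K:ℝ)+1))) := by
      rw [hy m]
      calc ‖∑ k ∈ Finset.range K, A m k x₀‖
          ≤ ∑ k ∈ Finset.range K, ‖A m k x₀‖ := norm_sum_le _ _
        _ ≤ ∑ _k ∈ Finset.range K, c/(2*((K:ℝ)+1)) := by
            refine Finset.sum_le_sum fun k hk => ?_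
            exact le_of_lt (hm2 k hk)
        _ = (K:ℝ) * (c/(2*((K:ℝ)+1))) := by
            rw [Finset.sum_const, Finset.card_range, nsmul_eq_mul]
    have h2 : c ≤ ‖y m‖ + ‖y m - T x₀‖ := by
      calc c = ‖y m - (y m - T x₀)‖ := by rw [hcdef]; congr 1; abel
        _ ≤ ‖y m‖ + ‖y m - T x₀‖ := norm_sub_le _ _
    have h3 : (K:ℝ) * (c/(2*((K:ℝ)+1))) < c/2 := by
      rw [← mul_div_assoc, div_lt_div_iff₀ (by positivity) (by positivity)]
      nlinarith [hc0, (Nat.cast_nonneg K : (0:ℝ) ≤ K)]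
    linarith
  -- tallness: an infinite I-set of active columns
  obtain ⟨S, hSsub, hSinf, hSI⟩ := hI_tall _ hCinf
  have hSw : ∀ k ∈ S, ∃ n, A n k x₀ ≠ 0 := fun k hk => hSsub hk
  choose! w hw using hSw
  -- row support bounds
  have hMex : ∀ n, ∃ M : ℕ, ∀ k, M ≤ k → A n k = 0 := by
    intro n
    obtain ⟨M, hM⟩ := (hrow n).bddAbove
    refine ⟨M+1, fun k hk => ?_⟩
    by_contra h
    have := hM (h : k ∈ {k | A n k ≠ 0})
    omega
  choose M hM using hMex
  -- the increasing column sequence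
  have hSnext : ∀ m : ℕ, ∃ k, k ∈ S ∧ m < k := by
    intro m
    obtain ⟨k, hk1, hk2⟩ := hSinf.exists_gt m
    exact ⟨k, hk1, hk2⟩
  choose nxt hnxt1 hnxt2 using hSnext
  obtain ⟨k0, hk0⟩ := hSinf.nonempty
  set kk : ℕ → ℕ := fun i => Nat.rec k0 (fun _ prev => nxt (max (M (w prev)) prev)) i with hkk
  have hkksucc : ∀ i, kk (i+1) = nxt (max (M (w (kk i))) (kk i)) := fun _ => rfl
  have hkkS : ∀ i, kk i ∈ S := by
    intro i
    induction i with
    | zero => exact hk0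
    | succ i _ => rw [hkksucc]; exact hnxt1 _
  have hkkmono : StrictMono kk := by
    refine strictMono_nat_of_lt_succ fun i => ?_
    rw [hkksucc]
    exact lt_of_le_of_lt (le_max_right _ _) (hnxt2 _)
  have hkkM : ∀ i, M (w (kk i)) ≤ kk (i+1) := by
    intro i
    rw [hkksucc]
    exact le_of_lt (lt_of_le_of_lt (le_max_left _ _) (hnxt2 _))
  have hAkk : ∀ i, A (w (kk i)) (kk i) x₀ ≠ 0 := fun i => hw _ (hkkS i)
  -- the coefficients, by strong recursion
  set Φ : ℕ → (ℕ → ℝ) → ℝ := fun i prev =>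
    ((i:ℝ) + 1 + ‖∑ j ∈ Finset.range i, prev j • A (w (kk i)) (kk j) x₀‖)
      / ‖A (w (kk i)) (kk i) x₀‖ with hΦ
  set f : ℕ → (ℕ → ℝ) := fun i =>
    Nat.rec (fun _ => 0) (fun i fi => Function.update fi i (Φ i fi)) i with hfdef
  set cc : ℕ → ℝ := fun i => f (i+1) i with hccdef
  have hfc : ∀ i j, j < i → f i j = cc j := by
    intro i
    induction i with
    | zero => intro j hj; omega
    | succ i ih =>
      intro j hj
      rcases Nat.lt_succ_iff_lt_or_eq.mp hj with h | h
      · have he : f (i+1) j = f i j := by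
          show Function.update (f i) i (Φ i (f i)) j = f i j
          exact Function.update_of_ne (by omega) _ _
        rw [he, ih j h]
      · subst h; rfl
  have hccEq : ∀ i, cc i =
      ((i:ℝ) + 1 + ‖∑ j ∈ Finset.range i, cc j • A (w (kk i)) (kk j) x₀‖)
        / ‖A (w (kk i)) (kk i) x₀‖ := by
    intro i
    have h1 : cc i = Φ i (f i) := by
      show Function.update (f i) i (Φ i (f i)) i = Φ i (f i)
      exact Function.update_self _ _ _
    have h2 : ∑ j ∈ Finset.range i, f i j • A (w (kk i)) (kk j) x₀
        = ∑ j ∈ Finset.range i, cc j • A (w (kk i)) (kk j) x₀ :=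
      Finset.sum_congr rfl fun j hj => by rw [hfc i j (Finset.mem_range.mp hj)]
    rw [h1, hΦ]
    simp only [h2]
  have hccnn : ∀ i, 0 ≤ cc i := by
    intro i
    rw [hccEq i]
    positivity
  have hkey : ∀ i, cc i * ‖A (w (kk i)) (kk i) x₀‖ =
      (i:ℝ) + 1 + ‖∑ j ∈ Finset.range i, cc j • A (w (kk i)) (kk j) x₀‖ := by
    intro i
    rw [hccEq i, div_mul_cancel₀]
    exact norm_ne_zero_iff.mpr (hAkk i)
  -- the unbounded test sequence
  set x : ℕ → X := fun m => if h : ∃ i, m = kk i then cc h.choose • x₀ else 0 with hxdef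
  have hxkk : ∀ i, x (kk i) = cc i • x₀ := by
    intro i
    have h : ∃ j, kk i = kk j := ⟨i, rfl⟩
    have hch : h.choose = i := hkkmono.injective h.choose_spec.symm
    simp only [hxdef]
    rw [dif_pos h, hch]
  have hx0 : ∀ m, (∀ i, m ≠ kk i) → x m = 0 := by
    intro m hm
    simp only [hxdef]
    rw [dif_neg]
    push_neg
    exact hm
  have hxconv : ∀ ε : ℝ, 0 < ε → {m | ε ≤ ‖x m - 0‖} ∈ I := by
    intro ε hε
    refine hI_sub _ _ hSI ?_
    intro m hm
    by_contra hmS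
    have hmne : ∀ i, m ≠ kk i := fun i h => hmS (h ▸ hkkS i)
    rw [Set.mem_setOf_eq, hx0 m hmne, sub_zero, norm_zero] at hm
    linarith
  obtain ⟨y, hy1, ⟨r, hr⟩, -⟩ := hA x 0 hxconv
  have hyval : ∀ i, y (w (kk i)) = ∑ j ∈ Finset.range (i+1), cc j • A (w (kk i)) (kk j) x₀ := by
    intro i
    have hkiM : kk i < M (w (kk i)) := by
      by_contra h
      exact hAkk i (by rw [hM (w (kk i)) (kk i) (not_lt.mp h)]; simp)
    refine tendsto_nhds_unique (hy1 (w (kk i))) ?_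
    refine Tendsto.congr' ?_ tendsto_const_nhds
    filter_upwards [eventually_ge_atTop (M (w (kk i)))] with m hm
    have himg : (Finset.range (i+1)).image kk ⊆ Finset.range m := by
      intro l hl
      obtain ⟨j, hj, rfl⟩ := Finset.mem_image.mp hl
      have hji : j ≤ i := Nat.lt_succ_iff.mp (Finset.mem_range.mp hj)
      have h1 : kk j ≤ kk i := hkkmono.monotone hji
      exact Finset.mem_range.mpr (by omega)
    have hzero : ∀ l ∈ Finset.range m, l ∉ (Finset.range (i+1)).image kk →
        A (w (kk i)) l (x l) = 0 := by
      intro l _ hl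
      by_cases hc : ∃ j, l = kk j
      · obtain ⟨j, rfl⟩ := hc
        have hji : i + 1 ≤ j := by
          by_contra h
          exact hl (Finset.mem_image.mpr ⟨j, Finset.mem_range.mpr (by omega), rfl⟩)
        have h1 : M (w (kk i)) ≤ kk j := le_trans (hkkM i) (hkkmono.monotone hji)
        rw [hM (w (kk i)) (kk j) h1]
        simp
      · push_neg at hc
        rw [hx0 _ hc, map_zero]
    calc ∑ j ∈ Finset.range (i+1), cc j • A (w (kk i)) (kk j) x₀
        = ∑ j ∈ Finset.range (i+1), A (w (kk i)) (kk j) (x (kk j)) := by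
          refine Finset.sum_congr rfl fun j _ => ?_
          rw [hxkk j, map_smul]
      _ = ∑ l ∈ (Finset.range (i+1)).image kk, A (w (kk i)) l (x l) := by
          exact (Finset.sum_image (f := fun l => A (w (kk i)) l (x l))
            fun a _ b _ h => hkkmono.injective h).symm
      _ = ∑ l ∈ Finset.range m, A (w (kk i)) l (x l) := Finset.sum_subset himg hzero
  have hbig : ∀ i : ℕ, (i:ℝ) + 1 ≤ ‖y (w (kk i))‖ := by
    intro i
    rw [hyval i, Finset.sum_range_succ]
    set a := ∑ j ∈ Finset.range i, cc j • A (w (kk i)) (kk j) x₀ with ha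
    have h1 : ‖cc i • A (w (kk i)) (kk i) x₀‖ = cc i * ‖A (w (kk i)) (kk i) x₀‖ := by
      rw [norm_smul, Real.norm_eq_abs, abs_of_nonneg (hccnn i)]
    have h2 : ‖cc i • A (w (kk i)) (kk i) x₀‖ ≤ ‖a + cc i • A (w (kk i)) (kk i) x₀‖ + ‖a‖ := by
      have h3 := norm_sub_le (a + cc i • A (w (kk i)) (kk i) x₀) a
      simpa using h3
    have h4 := hkey i
    rw [h1] at h2
    linarith
  obtain ⟨i, hi⟩ := exists_nat_gt r
  have hb := hbig i
  have hrr := hr (w (kk i))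
  linarith
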